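/- arXiv:1405.7754 — 2 statements merged into one kernel-verified Lean document; each statement's English description precedes it below -/
import Mathlib

section
/- Let u be a real-valued C^2 function on an open set D ⊆ ℝ² with Δu = 0 (u harmonic), and let R > 0. Define w(z) = |∇u(z)|/(u(z) + R) on the set where ∇u(z) ≠ 0 and u(z) + R > 0. Then Δ(log w) = w² at every such point. -/
open Complex

/-- The Laplacian of a function `u : ℂ → ℝ` (identifying `ℂ` with `ℝ²`):
`Δu = ∂²u/∂x² + ∂²u/∂y²`, expressed via the second iterated Fréchet derivative. -/
noncomputable def lap (u : ℂ → ℝ) (z : ℂ) : ℝ :=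
  iteratedFDeriv ℝ 2 u z ![1, 1] + iteratedFDeriv ℝ 2 u z ![Complex.I, Complex.I]

/-- The gradient of `u : ℂ → ℝ` as a complex number `uₓ + i·u_y`. -/
noncomputable def grad (u : ℂ → ℝ) (z : ℂ) : ℂ :=
  (fderiv ℝ u z 1 : ℂ) + (fderiv ℝ u z Complex.I : ℂ) * Complex.I

lemma fderiv_apply_eq {f : ℂ → ℝ} {z : ℂ} (v : ℂ) (hf : DifferentiableAt ℝ (fderiv ℝ f) z)
    (a : ℂ) :
    fderiv ℝ (fun w => fderiv ℝ f w v) z a = fderiv ℝ (fderiv ℝ f) z a v := by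
  have h : (fun w => fderiv ℝ f w v) = (ContinuousLinearMap.apply ℝ ℝ v) ∘ (fderiv ℝ f) := rfl
  rw [h, fderiv_comp z ((ContinuousLinearMap.apply ℝ ℝ v).differentiableAt) hf]
  simp [ContinuousLinearMap.fderiv]

lemma diff_fderiv {f : ℂ → ℝ} {z : ℂ} (hf : ContDiffAt ℝ 2 f z) :
    DifferentiableAt ℝ (fderiv ℝ f) z := by
  have : ContDiffAt ℝ 1 (fderiv ℝ f) z := hf.fderiv_right (by norm_num)
  exact this.differentiableAt (by norm_num)

lemma lap_eq {f : ℂ → ℝ} {z : ℂ} (hf : ContDiffAt ℝ 2 f z) :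
    lap f z = fderiv ℝ (fun w => fderiv ℝ f w 1) z 1
      + fderiv ℝ (fun w => fderiv ℝ f w Complex.I) z Complex.I := by
  have hd := diff_fderiv hf
  rw [lap, iteratedFDeriv_two_apply, iteratedFDeriv_two_apply,
    fderiv_apply_eq 1 hd, fderiv_apply_eq Complex.I hd]
  simp

lemma lap_congr {f g : ℂ → ℝ} {z : ℂ} (h : f =ᶠ[nhds z] g) : lap f z = lap g z := by
  rw [lap, lap, iteratedFDeriv_two_apply, iteratedFDeriv_two_apply,
    iteratedFDeriv_two_apply, iteratedFDeriv_two_apply, h.fderiv.fderiv_eq]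

-- differentiability of w ↦ fderiv f w v at z
lemma diff_fderiv_apply {f : ℂ → ℝ} {z : ℂ} (hf : ContDiffAt ℝ 2 f z) (v : ℂ) :
    DifferentiableAt ℝ (fun w => fderiv ℝ f w v) z := by
  have h : (fun w => fderiv ℝ f w v) = (ContinuousLinearMap.apply ℝ ℝ v) ∘ (fderiv ℝ f) := rfl
  rw [h]
  exact ((ContinuousLinearMap.apply ℝ ℝ v).differentiableAt).comp z (diff_fderiv hf)

lemma lap_sub {f g : ℂ → ℝ} {z : ℂ} (hf : ContDiffAt ℝ 2 f z) (hg : ContDiffAt ℝ 2 g z) :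
    lap (fun w => f w - g w) z = lap f z - lap g z := by
  have hev : ∀ v : ℂ, (fun w => fderiv ℝ (fun w => f w - g w) w v)
      =ᶠ[nhds z] (fun w => fderiv ℝ f w v - fderiv ℝ g w v) := by
    intro v
    have h1 := (hf.eventually (by norm_num)).mono
      (fun w hw => hw.differentiableAt (by norm_num))
    have h2 := (hg.eventually (by norm_num)).mono
      (fun w hw => hw.differentiableAt (by norm_num))
    filter_upwards [h1, h2] with w hw1 hw2
    rw [fderiv_fun_sub hw1 hw2]; rfl
  rw [lap_eq (hf.sub hg), lap_eq hf, lap_eq hg,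
    (hev 1).fderiv_eq, (hev Complex.I).fderiv_eq,
    fderiv_fun_sub (diff_fderiv_apply hf 1) (diff_fderiv_apply hg 1),
    fderiv_fun_sub (diff_fderiv_apply hf Complex.I) (diff_fderiv_apply hg Complex.I)]
  simp only [ContinuousLinearMap.sub_apply]
  ring

lemma lap_log_pos {φ : ℂ → ℝ} {z : ℂ} (hφ : ContDiffAt ℝ 2 φ z) (hpos : 0 < φ z) :
    lap (fun ζ => Real.log (φ ζ)) z
      = lap φ z / φ z
        - ((fderiv ℝ φ z 1) ^ 2 + (fderiv ℝ φ z Complex.I) ^ 2) / (φ z) ^ 2 := by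
  have hlog : ContDiffAt ℝ 2 (fun ζ => Real.log (φ ζ)) z :=
    (Real.contDiffAt_log.mpr (ne_of_gt hpos)).comp z hφ
  -- eventually φ differentiable and positive
  have hdiff : ∀ᶠ w in nhds z, DifferentiableAt ℝ φ w :=
    (hφ.eventually (by norm_num)).mono (fun w hw => hw.differentiableAt (by norm_num))
  have hposev : ∀ᶠ w in nhds z, 0 < φ w :=
    continuousAt_const.eventually_lt hφ.continuousAt hpos
  -- the fderiv of log ∘ φ near z
  have hfd : ∀ᶠ w in nhds z, fderiv ℝ (fun ζ => Real.log (φ ζ)) w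
      = (φ w)⁻¹ • fderiv ℝ φ w := by
    filter_upwards [hdiff, hposev] with w hw hp
    exact ((Real.hasDerivAt_log (ne_of_gt hp)).comp_hasFDerivAt w hw.hasFDerivAt).fderiv
  have key : ∀ v : ℂ, fderiv ℝ (fun w => fderiv ℝ (fun ζ => Real.log (φ ζ)) w v) z v
      = -(φ z)⁻¹ ^ 2 * (fderiv ℝ φ z v) ^ 2
        + (φ z)⁻¹ * fderiv ℝ (fun w => fderiv ℝ φ w v) z v := by
    intro v
    have hev : (fun w => fderiv ℝ (fun ζ => Real.log (φ ζ)) w v)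
        =ᶠ[nhds z] (fun w => (φ w)⁻¹ * fderiv ℝ φ w v) := by
      filter_upwards [hfd] with w hw
      rw [hw]; rfl
    rw [hev.fderiv_eq]
    have h1 : HasFDerivAt (fun w => (φ w)⁻¹)
        ((-(φ z)⁻¹ ^ 2) • fderiv ℝ φ z) z := by
      have := (hasDerivAt_inv (ne_of_gt hpos)).comp_hasFDerivAt z
        (hφ.differentiableAt (by norm_num)).hasFDerivAt
      rw [show (-(φ z)⁻¹ ^ 2) = -(φ z ^ 2)⁻¹ by ring]
      exact this
    have h2 : HasFDerivAt (fun w => fderiv ℝ φ w v)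
        ((ContinuousLinearMap.apply ℝ ℝ v).comp (fderiv ℝ (fderiv ℝ φ) z)) z := by
      have h : (fun w => fderiv ℝ φ w v) = (ContinuousLinearMap.apply ℝ ℝ v) ∘ (fderiv ℝ φ) := rfl
      rw [h]
      exact (ContinuousLinearMap.apply ℝ ℝ v).hasFDerivAt.comp z (diff_fderiv hφ).hasFDerivAt
    have := (h1.fun_mul h2).fderiv
    rw [this]
    have happ := fderiv_apply_eq v (diff_fderiv hφ) v
    rw [fderiv_apply_eq v (diff_fderiv hφ) v] at *
    simp only [ContinuousLinearMap.add_apply, ContinuousLinearMap.smul_apply,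
      ContinuousLinearMap.coe_comp', Function.comp_apply, ContinuousLinearMap.apply_apply,
      smul_eq_mul]
    ring
  rw [lap_eq hlog, key 1, key Complex.I, lap_eq hφ]
  have hne : φ z ≠ 0 := ne_of_gt hpos
  field_simp
  ring

lemma lap_re_holo {h : ℂ → ℂ} {z : ℂ} {V : Set ℂ} (hVo : IsOpen V) (hzV : z ∈ V)
    (hh : ∀ w ∈ V, DifferentiableAt ℂ h w) :
    lap (fun ζ => (h ζ).re) z = 0 := by
  have hD : DifferentiableOn ℂ h V := fun w hw => (hh w hw).differentiableWithinAt
  have hA : AnalyticOnNhd ℂ h V := hD.analyticOnNhd hVo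
  have hC : ContDiffAt ℝ 2 (fun ζ => (h ζ).re) z := by
    have h1 : ContDiffAt ℂ 2 h z := (hA z hzV).contDiffAt
    exact (Complex.reCLM.contDiff.contDiffAt).comp z (h1.restrict_scalars ℝ)
  -- L v : x ↦ (x * v).re as a real CLM
  set L : ℂ → (ℂ →L[ℝ] ℝ) := fun v =>
    Complex.reCLM.comp (((ContinuousLinearMap.mul ℂ ℂ).flip v).restrictScalars ℝ) with hL
  have hLapp : ∀ v x : ℂ, L v x = (x * v).re := fun v x => rfl
  have hg : AnalyticOnNhd ℂ (deriv h) V := hA.deriv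
  have hev : ∀ v : ℂ, (fun w => fderiv ℝ (fun ζ => (h ζ).re) w v)
      =ᶠ[nhds z] (fun w => L v (deriv h w)) := by
    intro v
    filter_upwards [hVo.mem_nhds hzV] with w hw
    have hdw := hh w hw
    have h1 : fderiv ℝ (fun ζ => (h ζ).re) w
        = Complex.reCLM.comp (fderiv ℝ h w) :=
      (Complex.reCLM.hasFDerivAt.comp w (hdw.restrictScalars ℝ).hasFDerivAt).fderiv
    rw [h1]
    have h2 : fderiv ℝ h w = (fderiv ℂ h w).restrictScalars ℝ :=
      hdw.fderiv_restrictScalars ℝ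
    simp only [ContinuousLinearMap.coe_comp', Function.comp_apply, h2,
      ContinuousLinearMap.coe_restrictScalars', hLapp]
    rw [fderiv_eq_smul_deriv]
    simp [smul_eq_mul, mul_comm]
  have hkey : ∀ v : ℂ, fderiv ℝ (fun w => fderiv ℝ (fun ζ => (h ζ).re) w v) z v
      = (deriv (deriv h) z * v * v).re := by
    intro v
    rw [(hev v).fderiv_eq]
    have hgd : DifferentiableAt ℂ (deriv h) z := (hg z hzV).differentiableAt
    have h3 : fderiv ℝ (fun w => L v (deriv h w)) z
        = (L v).comp (fderiv ℝ (deriv h) z) :=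
      ((L v).hasFDerivAt.comp z (hgd.restrictScalars ℝ).hasFDerivAt).fderiv
    rw [h3]
    simp only [ContinuousLinearMap.coe_comp', Function.comp_apply]
    rw [hgd.fderiv_restrictScalars ℝ]
    simp only [ContinuousLinearMap.coe_restrictScalars', hLapp]
    rw [fderiv_eq_smul_deriv]
    simp [smul_eq_mul]; ring_nf
  rw [lap_eq hC, hkey 1, hkey Complex.I]
  simp [Complex.I_mul_I]

lemma conj_grad_eq (u : ℂ → ℝ) (w : ℂ) :
    (starRingEnd ℂ) (grad u w)
      = (fderiv ℝ u w 1 : ℂ) - (fderiv ℝ u w Complex.I : ℂ) * Complex.I := by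
  simp [grad, map_add, map_mul, Complex.conj_ofReal, Complex.conj_I]
  ring

lemma holo_conj_grad {u : ℂ → ℝ} {D : Set ℂ} (hD : IsOpen D) (hu : ContDiffOn ℝ 2 u D)
    (hharm : ∀ z ∈ D, lap u z = 0) :
    ∀ ζ ∈ D, DifferentiableAt ℂ (fun w => (starRingEnd ℂ) (grad u w)) ζ := by
  intro ζ hζ
  have hu2 : ContDiffAt ℝ 2 u ζ := (hu ζ hζ).contDiffAt (hD.mem_nhds hζ)
  have hdd : DifferentiableAt ℝ (fderiv ℝ u) ζ := diff_fderiv hu2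
  have hD2 : True := trivial
  let D2 : ℂ →L[ℝ] ℂ →L[ℝ] ℝ := fderiv ℝ (fderiv ℝ u) ζ
  let Da : ℂ →L[ℝ] ℝ := (ContinuousLinearMap.apply ℝ ℝ 1).comp D2
  let Db : ℂ →L[ℝ] ℝ := (ContinuousLinearMap.apply ℝ ℝ Complex.I).comp D2
  have hDav : ∀ v, Da v = D2 v 1 := fun v => rfl
  have hDbv : ∀ v, Db v = D2 v Complex.I := fun v => rfl
  have ha' := (ContinuousLinearMap.apply ℝ ℝ (1 : ℂ)).hasFDerivAt.comp ζ hdd.hasFDerivAt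
  have ha : HasFDerivAt (fun w => fderiv ℝ u w 1) Da ζ := ha'
  have hb' := (ContinuousLinearMap.apply ℝ ℝ Complex.I).hasFDerivAt.comp ζ hdd.hasFDerivAt
  have hb : HasFDerivAt (fun w => fderiv ℝ u w Complex.I) Db ζ := hb'
  let MI : ℂ →L[ℝ] ℂ := ((ContinuousLinearMap.mul ℂ ℂ) Complex.I).restrictScalars ℝ
  let g' : ℂ →L[ℝ] ℂ :=
    Complex.ofRealCLM.comp Da - MI.comp (Complex.ofRealCLM.comp Db)
  have hg'v : ∀ v, g' v = (Da v : ℂ) - Complex.I * (Db v : ℂ) := fun v => rfl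
  have hf : HasFDerivAt (fun w => (starRingEnd ℂ) (grad u w)) g' ζ := by
    have h1 : HasFDerivAt (fun w => (fderiv ℝ u w 1 : ℂ))
        (Complex.ofRealCLM.comp Da) ζ := Complex.ofRealCLM.hasFDerivAt.comp ζ ha
    have h2 : HasFDerivAt (fun w => Complex.I * (fderiv ℝ u w Complex.I : ℂ))
        (MI.comp (Complex.ofRealCLM.comp Db)) ζ :=
      MI.hasFDerivAt.comp ζ (Complex.ofRealCLM.hasFDerivAt.comp ζ hb)
    have := h1.sub h2
    apply this.congr_of_eventuallyEq
    filter_upwards with w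
    rw [conj_grad_eq]
    simp only [Pi.sub_apply]; ring
  -- Cauchy-Riemann from symmetry and harmonicity
  have hsymm : D2 Complex.I 1 = D2 1 Complex.I :=
    (hu2.isSymmSndFDerivAt (by simp [minSmoothness_of_isRCLikeNormedField])) Complex.I 1
  have hharm' : D2 1 1 + D2 Complex.I Complex.I = 0 := by
    have := hharm ζ hζ
    rw [lap, iteratedFDeriv_two_apply, iteratedFDeriv_two_apply] at this
    simpa using this
  have key : ∀ v : ℂ, g' v = (g' 1) * v := by
    have kI : g' Complex.I = (g' 1) * Complex.I := by
      rw [hg'v, hg'v]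
      have e1 : Da Complex.I = Db 1 := by rw [hDav, hDbv, hsymm]
      have e2 : Db Complex.I = -Da 1 := by
        rw [hDav, hDbv] at *
        linarith [hharm']
      rw [e1, e2]
      push_cast
      ring_nf
      rw [Complex.I_sq]
      ring
    intro v
    have hv : (v.re : ℂ) + (v.im : ℂ) * Complex.I = v := Complex.re_add_im v
    have : g' v = g' (v.re • (1 : ℂ) + v.im • Complex.I) := by
      congr 1
      rw [Complex.real_smul, Complex.real_smul, mul_one, hv]
    rw [this, map_add, map_smul, map_smul, kI]
    conv_rhs => rw [← hv]
    rw [Complex.real_smul, Complex.real_smul]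
    ring
  have : HasFDerivAt (fun w => (starRingEnd ℂ) (grad u w))
      (((g' 1) • ContinuousLinearMap.id ℂ ℂ) : ℂ →L[ℂ] ℂ) ζ := by
    apply hasFDerivAt_of_restrictScalars ℝ hf
    ext v
    simp only [ContinuousLinearMap.coe_restrictScalars', ContinuousLinearMap.smul_apply,
      ContinuousLinearMap.id_apply, smul_eq_mul]
    exact (key v).symm
  exact this.differentiableAt

/-- If `u` is harmonic and `C²` on an open set `D ⊆ ℝ²` and `R > 0`, then
`w = |∇u|/(u + R)` satisfies `Δ(log w) = w²` at every point of `D` where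
`∇u ≠ 0` and `u + R > 0`. -/
theorem stmt0 (D : Set ℂ) (hD : IsOpen D) (u : ℂ → ℝ)
    (hu : ContDiffOn ℝ 2 u D) (hharm : ∀ z ∈ D, lap u z = 0)
    (R : ℝ) (hR : 0 < R)
    (w : ℂ → ℝ) (hw : ∀ z, w z = ‖grad u z‖ / (u z + R)) :
    ∀ z ∈ D, grad u z ≠ 0 → 0 < u z + R →
      lap (fun ζ => Real.log (w ζ)) z = (w z) ^ 2 := by
  intro z hz hgrad hpos
  set f : ℂ → ℂ := fun ζ => (starRingEnd ℂ) (grad u ζ) with hf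
  have hf_holo : ∀ ζ ∈ D, DifferentiableAt ℂ f ζ := holo_conj_grad hD hu hharm
  have hnormf : ∀ ζ, ‖f ζ‖ = ‖grad u ζ‖ := fun ζ => norm_star _
  have hfz : f z ≠ 0 := by
    simp only [hf, ne_eq, map_eq_zero]
    exact hgrad
  have hfznorm : (0 : ℝ) < ‖f z‖ := norm_pos_iff.mpr hfz
  -- rotation constant
  set c : ℂ := (‖f z‖ : ℂ) / f z with hc
  have hcf : c * f z = (‖f z‖ : ℂ) := div_mul_cancel₀ _ hfz
  have hcnorm : ‖c‖ = 1 := by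
    rw [hc, norm_div, Complex.norm_real, Real.norm_of_nonneg (norm_nonneg _),
      div_self (ne_of_gt hfznorm)]
  -- the open set V
  set V : Set ℂ := D ∩ (fun ζ => c * f ζ) ⁻¹' Complex.slitPlane with hV
  have hfc : ContinuousOn (fun ζ => c * f ζ) D :=
    continuousOn_const.mul (fun ζ hζ => (hf_holo ζ hζ).continuousAt.continuousWithinAt)
  have hVo : IsOpen V := hfc.isOpen_inter_preimage hD Complex.isOpen_slitPlane
  have hzV : z ∈ V := by
    refine ⟨hz, ?_⟩
    show c * f z ∈ Complex.slitPlane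
    rw [hcf]
    exact Complex.ofReal_mem_slitPlane.mpr hfznorm
  -- the holomorphic logarithm
  set h : ℂ → ℂ := fun ζ => Complex.log (c * f ζ) with hh
  have hh_holo : ∀ ζ ∈ V, DifferentiableAt ℂ h ζ := by
    intro ζ hζ
    exact (Complex.differentiableAt_log hζ.2).comp ζ
      ((differentiableAt_const c).mul (hf_holo ζ hζ.1))
  -- real part of h is log ‖grad u‖
  have hre : ∀ ζ, (h ζ).re = Real.log ‖grad u ζ‖ := by
    intro ζ
    rw [hh]
    simp only
    rw [Complex.log_re, norm_mul]
    rw [hcnorm, one_mul, hnormf]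
  have lapA : lap (fun ζ => Real.log ‖grad u ζ‖) z = 0 := by
    have : (fun ζ => Real.log ‖grad u ζ‖) = fun ζ => (h ζ).re := by
      funext ζ; rw [hre]
    rw [this]
    exact lap_re_holo hVo hzV hh_holo
  -- ContDiffAt of the A part
  have hAcd : ContDiffAt ℝ 2 (fun ζ => Real.log ‖grad u ζ‖) z := by
    have hDh : DifferentiableOn ℂ h V := fun ζ hζ => (hh_holo ζ hζ).differentiableWithinAt
    have hAn : AnalyticOnNhd ℂ h V := hDh.analyticOnNhd hVo
    have h1 : ContDiffAt ℂ 2 h z := (hAn z hzV).contDiffAt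
    have h2 : ContDiffAt ℝ 2 (fun ζ => (h ζ).re) z :=
      (Complex.reCLM.contDiff.contDiffAt).comp z (h1.restrict_scalars ℝ)
    have : (fun ζ => Real.log ‖grad u ζ‖) = fun ζ => (h ζ).re := by
      funext ζ; rw [hre]
    rwa [this]
  -- the φ part
  set φ : ℂ → ℝ := fun ζ => u ζ + R with hφdef
  have hφ : ContDiffAt ℝ 2 φ z :=
    ((hu z hz).contDiffAt (hD.mem_nhds hz)).add contDiffAt_const
  have hu2 : ContDiffAt ℝ 2 u z := (hu z hz).contDiffAt (hD.mem_nhds hz)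
  have hφfderiv : ∀ ζ, fderiv ℝ φ ζ = fderiv ℝ u ζ := by
    intro ζ
    exact fderiv_add_const R
  have hlapφ : lap φ z = 0 := by
    rw [lap_eq hφ]
    simp only [hφfderiv]
    rw [← lap_eq hu2]
    exact hharm z hz
  have hBcd : ContDiffAt ℝ 2 (fun ζ => Real.log (φ ζ)) z :=
    (Real.contDiffAt_log.mpr (ne_of_gt hpos)).comp (g := Real.log) z hφ
  have lapB : lap (fun ζ => Real.log (φ ζ)) z
      = -((fderiv ℝ u z 1) ^ 2 + (fderiv ℝ u z Complex.I) ^ 2) / (φ z) ^ 2 := by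
    rw [lap_log_pos hφ hpos, hlapφ, hφfderiv]
    ring
  -- norm of grad squared
  have hgrad_sq : ‖grad u z‖ ^ 2 = (fderiv ℝ u z 1) ^ 2 + (fderiv ℝ u z Complex.I) ^ 2 := by
    rw [grad, Complex.sq_norm, Complex.normSq_apply]
    simp
    ring
  -- eventual equality of log w with the difference
  have hev : (fun ζ => Real.log (w ζ))
      =ᶠ[nhds z] (fun ζ => Real.log ‖grad u ζ‖ - Real.log (φ ζ)) := by
    have e1 : ∀ᶠ ζ in nhds z, f ζ ≠ 0 :=
      ((hf_holo z hz).continuousAt).eventually_ne hfz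
    have e2 : ∀ᶠ ζ in nhds z, 0 < φ ζ :=
      continuousAt_const.eventually_lt hφ.continuousAt hpos
    filter_upwards [e1, e2] with ζ h1 h2
    rw [hw ζ, Real.log_div (by rw [← hnormf]; exact norm_ne_zero_iff.mpr h1) (ne_of_gt h2)]
  rw [lap_congr hev, lap_sub hAcd hBcd, lapA, lapB, hw z, div_pow, hgrad_sq]
  simp only [hφdef]
  ring
end

section
/- Let w, v : K → ℝ be positive C² functions on a bounded open set K ⊆ ℝ² with Δ(log w) = w² and Δ(log v) = v² on K. Suppose log w − log v extends continuously to the closure of K, vanishes on ∂K, and is positive at some interior point. Then a contradiction follows; i.e. if log w − log v ≤ 0 on ∂K and Δ(log w − log v) ≥ w² − v² > 0 wherever w > v, then w ≤ v throughout K. -/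
open Complex

/-- Second derivative test: at an interior local max of a `C²` function, every second
directional derivative is nonpositive. -/
lemma secondDirDeriv_nonpos {f : ℂ → ℝ} {x : ℂ} (hf : ContDiffAt ℝ 2 f x)
    (hmax : IsLocalMax f x) (e : ℂ) : fderiv ℝ (fderiv ℝ f) x e e ≤ 0 := by
  by_contra hA
  push_neg at hA
  set L : ℝ → ℂ := fun t => x + t • e with hLdef
  have hL0 : L 0 = x := by simp [hLdef]
  have hLc : Continuous L := by fun_prop
  have htend : Filter.Tendsto L (nhds 0) (nhds x) := by
    have := hLc.continuousAt (x := (0:ℝ))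
    rwa [ContinuousAt, hL0] at this
  have hLd : ∀ t : ℝ, HasDerivAt L e t := by
    intro t
    have h := ((hasDerivAt_id t).smul_const e).const_add x
    rw [one_smul] at h
    exact h
  set g : ℝ → ℝ := fun t => f (L t) with hgdef
  have hdiff : ∀ᶠ y in nhds x, DifferentiableAt ℝ f y := by
    filter_upwards [hf.eventually (by simp)] with y hy
    exact hy.differentiableAt two_ne_zero
  have hdiffL : ∀ᶠ t in nhds (0:ℝ), DifferentiableAt ℝ f (L t) := htend.eventually hdiff
  have hderivg : ∀ᶠ t in nhds (0:ℝ), HasDerivAt g (fderiv ℝ f (L t) e) t := by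
    filter_upwards [hdiffL] with t ht
    exact ht.hasFDerivAt.comp_hasDerivAt t (hLd t)
  set G : ℝ → ℝ := fun t => fderiv ℝ f (L t) e with hGdef
  have hgG : deriv g =ᶠ[nhds (0:ℝ)] G := by
    filter_upwards [hderivg] with t ht using ht.deriv
  have hd2 : DifferentiableAt ℝ (fderiv ℝ f) x :=
    (hf.fderiv_right (m := 1) one_add_one_eq_two.le).differentiableAt one_ne_zero
  have hG : HasDerivAt G (fderiv ℝ (fderiv ℝ f) x e e) 0 := by
    have h1 : HasDerivAt (fun t => fderiv ℝ f (L t)) (fderiv ℝ (fderiv ℝ f) x e) 0 := by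
      have hd2' : HasFDerivAt (fderiv ℝ f) (fderiv ℝ (fderiv ℝ f) x) (L 0) := by
        rw [hL0]; exact hd2.hasFDerivAt
      exact hd2'.comp_hasDerivAt 0 (hLd 0)
    have h2 := h1.clm_apply (hasDerivAt_const 0 e)
    simpa using h2
  have hmaxg : IsLocalMax g 0 := by
    filter_upwards [htend.eventually hmax] with t ht
    show f (L t) ≤ f (L 0)
    rwa [hL0]
  have hg0 : deriv g 0 = 0 := hmaxg.deriv_eq_zero
  have hG0 : G 0 = 0 := by rw [← hgG.eq_of_nhds, hg0]
  have hslope : ∀ᶠ t in nhdsWithin (0:ℝ) (Set.Ioi 0), 0 < G t := by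
    have h1 := hasDerivAt_iff_tendsto_slope.mp hG
    have h2 : ∀ᶠ t in nhdsWithin (0:ℝ) {(0:ℝ)}ᶜ, 0 < slope G 0 t :=
      h1.eventually (eventually_gt_nhds hA)
    have h3 : ∀ᶠ t in nhdsWithin (0:ℝ) (Set.Ioi 0), 0 < slope G 0 t :=
      h2.filter_mono (nhdsWithin_mono 0 (fun t ht => ne_of_gt ht))
    filter_upwards [h3, self_mem_nhdsWithin] with t ht h0t
    have hs : slope G 0 t = G t / t := by
      simp [slope_def_field, hG0]
    rw [hs] at ht
    rcases div_pos_iff.mp ht with ⟨h, _⟩ | ⟨_, h⟩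
    · exact h
    · exact absurd h0t (not_lt.mpr h.le)
  have hderiv_pos : ∀ᶠ t in nhdsWithin (0:ℝ) (Set.Ioi 0), 0 < deriv g t := by
    filter_upwards [hslope, hgG.filter_mono nhdsWithin_le_nhds] with t h1 h2
    rw [h2]; exact h1
  have hcontg : ∀ᶠ t in nhds (0:ℝ), ContinuousAt g t := by
    filter_upwards [hderivg] with t ht using ht.continuousAt
  obtain ⟨δ₁, hδ₁pos, h₁⟩ : ∃ δ > (0:ℝ), ∀ t : ℝ, |t| < δ → ContinuousAt g t ∧ g t ≤ g 0 := by
    have h := hcontg.and hmaxg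
    rw [Metric.eventually_nhds_iff] at h
    obtain ⟨ε, hε, hh⟩ := h
    exact ⟨ε, hε, fun t ht => hh (by simpa [Real.dist_eq] using ht)⟩
  obtain ⟨δ₂, hδ₂, h₂⟩ := mem_nhdsGT_iff_exists_Ioc_subset.mp hderiv_pos
  set δ : ℝ := min (δ₁ / 2) δ₂ with hδdef
  have hδpos : 0 < δ := lt_min (by linarith) hδ₂
  have habs : ∀ t : ℝ, t ∈ Set.Icc 0 δ → |t| < δ₁ := by
    intro t ht
    rw [_root_.abs_of_nonneg ht.1]
    have : δ ≤ δ₁ / 2 := min_le_left _ _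
    linarith [ht.2]
  have hmono : StrictMonoOn g (Set.Icc 0 δ) := by
    apply strictMonoOn_of_deriv_pos (convex_Icc 0 δ)
    · intro t ht
      exact ((h₁ t (habs t ht)).1).continuousWithinAt
    · intro t ht
      rw [interior_Icc] at ht
      exact h₂ ⟨ht.1, le_trans ht.2.le (min_le_right _ _)⟩
  have hlt : g 0 < g δ :=
    hmono ⟨le_refl 0, hδpos.le⟩ ⟨hδpos.le, le_refl δ⟩ hδpos
  have hle : g δ ≤ g 0 := (h₁ δ (habs δ ⟨hδpos.le, le_refl δ⟩)).2
  linarith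

/-- Comparison principle for the Liouville-type equation `Δ log w = w²`:
if `w, v` are positive `C²` solutions on a bounded open set `K ⊆ ℝ²`,
and `log w − log v` extends continuously to `closure K` with
`log w − log v ≤ 0` on `∂K`, then `w ≤ v` throughout `K`. -/
theorem stmt3 (K : Set ℂ) (hK : IsOpen K) (hKb : Bornology.IsBounded K)
    (w v : ℂ → ℝ)
    (hw : ContDiffOn ℝ 2 w K) (hv : ContDiffOn ℝ 2 v K)
    (hwpos : ∀ z ∈ K, 0 < w z) (hvpos : ∀ z ∈ K, 0 < v z)
    (hweq : ∀ z ∈ K, lap (fun ζ => Real.log (w ζ)) z = (w z) ^ 2)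
    (hveq : ∀ z ∈ K, lap (fun ζ => Real.log (v ζ)) z = (v z) ^ 2)
    (hcont : ContinuousOn (fun z => Real.log (w z) - Real.log (v z)) (closure K))
    (hbdry : ∀ z ∈ frontier K, Real.log (w z) - Real.log (v z) ≤ 0) :
    ∀ z ∈ K, w z ≤ v z := by
  intro z₀ hz₀
  by_contra hlt
  push_neg at hlt
  set u : ℂ → ℝ := fun z => Real.log (w z) - Real.log (v z) with hu
  have hfC : ContDiffOn ℝ 2 (fun z => Real.log (w z)) K :=
    hw.log (fun z hz => (hwpos z hz).ne')
  have hgC : ContDiffOn ℝ 2 (fun z => Real.log (v z)) K :=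
    hv.log (fun z hz => (hvpos z hz).ne')
  have huC : ContDiffOn ℝ 2 u K := hfC.sub hgC
  have hKc : IsCompact (closure K) :=
    Metric.isCompact_of_isClosed_isBounded isClosed_closure hKb.closure
  obtain ⟨x, hxcl, hxmax⟩ := hKc.exists_isMaxOn ⟨z₀, subset_closure hz₀⟩ hcont
  have hux : 0 < u x := by
    have h0 : 0 < u z₀ :=
      sub_pos.mpr ((Real.log_lt_log_iff (hvpos z₀ hz₀) (hwpos z₀ hz₀)).mpr hlt)
    exact lt_of_lt_of_le h0 (hxmax (subset_closure hz₀))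
  have hxK : x ∈ K := by
    by_contra hxK
    have hfr : x ∈ frontier K := by
      rw [frontier, hK.interior_eq]; exact ⟨hxcl, hxK⟩
    have := hbdry x hfr
    simp only [hu] at hux
    linarith
  have hwvx : v x < w x :=
    (Real.log_lt_log_iff (hvpos x hxK) (hwpos x hxK)).mp (sub_pos.mp hux)
  have hsub : ∀ m : Fin 2 → ℂ, iteratedFDeriv ℝ 2 u x m =
      iteratedFDeriv ℝ 2 (fun z => Real.log (w z)) x m
        - iteratedFDeriv ℝ 2 (fun z => Real.log (v z)) x m := by
    intro m
    have hueq : u = (fun z => Real.log (w z)) + (fun z => -(Real.log (v z))) := by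
      funext z; simp [hu, sub_eq_add_neg]
    have h1 : iteratedFDerivWithin ℝ 2 u K x =
        iteratedFDerivWithin ℝ 2 (fun z => Real.log (w z)) K x
          + iteratedFDerivWithin ℝ 2 (fun z => -(Real.log (v z))) K x := by
      rw [hueq]
      exact iteratedFDerivWithin_add_apply (hfC x hxK) (hgC.neg x hxK) hK.uniqueDiffOn hxK
    have h2 : iteratedFDerivWithin ℝ 2 (fun z => -(Real.log (v z))) K x =
        -iteratedFDerivWithin ℝ 2 (fun z => Real.log (v z)) K x :=
      iteratedFDerivWithin_neg_apply hK.uniqueDiffOn hxK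
    have e0 := iteratedFDerivWithin_of_isOpen (𝕜 := ℝ) (f := u) 2 hK hxK
    have e1 := iteratedFDerivWithin_of_isOpen (𝕜 := ℝ) (f := fun z => Real.log (w z)) 2 hK hxK
    have e2 := iteratedFDerivWithin_of_isOpen (𝕜 := ℝ) (f := fun z => Real.log (v z)) 2 hK hxK
    rw [← e0, ← e1, ← e2, h1, h2]
    simp [sub_eq_add_neg]
  have hlap : lap u x = (w x) ^ 2 - (v x) ^ 2 := by
    have hw2 := hweq x hxK
    have hv2 := hveq x hxK
    unfold lap at hw2 hv2 ⊢
    rw [hsub ![1, 1], hsub ![Complex.I, Complex.I]]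
    linarith
  have hlap_pos : 0 < lap u x := by
    rw [hlap]
    nlinarith [hvpos x hxK]
  have hCA : ContDiffAt ℝ 2 u x := huC.contDiffAt (hK.mem_nhds hxK)
  have hlm : IsLocalMax u x :=
    hxmax.isLocalMax (Filter.mem_of_superset (hK.mem_nhds hxK) subset_closure)
  have h1 := secondDirDeriv_nonpos hCA hlm 1
  have h2 := secondDirDeriv_nonpos hCA hlm Complex.I
  have he : lap u x = fderiv ℝ (fderiv ℝ u) x 1 1
      + fderiv ℝ (fderiv ℝ u) x Complex.I Complex.I := by
    unfold lap
    rw [iteratedFDeriv_two_apply, iteratedFDeriv_two_apply]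
    simp
  rw [he] at hlap_pos
  linarith
end
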